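/- arXiv:0902.3065 — 7 statements merged into one kernel-verified Lean document; each statement's English description precedes it below -/
import Mathlib

section
/- For all natural numbers M ≥ 1 and l ≥ 1, the sum over h from 1 to min(M,l) of C(M,h)·C(l-1,l-h)·(M-h) equals M·C(M+l-2,l). -/
/-- Number of GCEs that are not CEs: for M ≥ 1, l ≥ 1,
    ∑_{h=1}^{min(M,l)} C(M,h)·C(l-1,l-h)·(M-h) = M·C(M+l-2,l). -/
theorem mom_gce_count (M l : ℕ) (hM : 1 ≤ M) (hl : 1 ≤ l) :
    ∑ h ∈ Finset.Icc 1 (min M l),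
      Nat.choose M h * Nat.choose (l - 1) (l - h) * (M - h)
      = M * Nat.choose (M + l - 2) l := by
  -- pointwise identity: M.choose h * (M - h) = M * (M-1).choose h
  have point : ∀ h : ℕ, Nat.choose M h * (M - h) = M * Nat.choose (M - 1) h := by
    intro h
    have h1 := Nat.choose_succ_right_eq M h
    have h2 := Nat.add_one_mul_choose_eq (M - 1) h
    rw [Nat.sub_add_cancel hM] at h2
    exact (h2.trans h1).symm
  -- extend sum to range (l+1)
  have hext : ∑ h ∈ Finset.Icc 1 (min M l),
      Nat.choose M h * Nat.choose (l - 1) (l - h) * (M - h)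
      = ∑ h ∈ Finset.range (l + 1),
      Nat.choose M h * Nat.choose (l - 1) (l - h) * (M - h) := by
    apply Finset.sum_subset
    · intro x hx
      simp only [Finset.mem_Icc, Finset.mem_range] at *
      omega
    · intro x hx hnx
      simp only [Finset.mem_Icc, Finset.mem_range, not_and, not_le] at hx hnx
      rcases Nat.eq_zero_or_pos x with h0 | h0
      · subst h0
        simp [Nat.choose_eq_zero_of_lt (by omega : l - 1 < l)]
      · have hxM : M < x := by omega
        have : M - x = 0 := by omega
        simp [this]
  rw [hext]
  have : ∀ h ∈ Finset.range (l + 1),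
      Nat.choose M h * Nat.choose (l - 1) (l - h) * (M - h)
      = M * (Nat.choose (M - 1) h * Nat.choose (l - 1) (l - h)) := by
    intro h _
    rw [mul_right_comm, point h]; ring
  rw [Finset.sum_congr rfl this, ← Finset.mul_sum]
  congr 1
  have hv := Nat.add_choose_eq (M - 1) (l - 1) l
  rw [Finset.Nat.sum_antidiagonal_eq_sum_range_succ
    (fun i j => Nat.choose (M - 1) i * Nat.choose (l - 1) j) l] at hv
  have hsub : M - 1 + (l - 1) = M + l - 2 := by omega
  rw [hsub] at hv
  exact hv.symm
end

section
/- For all natural numbers M ≥ 2, R ≥ 1 and l ≥ 1, the inequality C(M+l-2,l-1)·(M+R-1) ≥ C(M+l-1,l)·R holds if and only if l ≥ R. -/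
/-- For M ≥ 2, R ≥ 1, l ≥ 1: C(M+l-2,l-1)·(M+R-1) ≥ C(M+l-1,l)·R ↔ l ≥ R. -/
theorem mom_ce_pc_balance (M R l : ℕ) (hM : 2 ≤ M) (hR : 1 ≤ R) (hl : 1 ≤ l) :
    Nat.choose (M + l - 2) (l - 1) * (M + R - 1) ≥ Nat.choose (M + l - 1) l * R ↔ R ≤ l := by
  obtain ⟨m, rfl⟩ : ∃ m, M = m + 2 := ⟨M - 2, by omega⟩
  obtain ⟨k, rfl⟩ : ∃ k, l = k + 1 := ⟨l - 1, by omega⟩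
  have e1 : m + 2 + (k + 1) - 2 = m + k + 1 := by omega
  have e2 : k + 1 - 1 = k := rfl
  have e3 : m + 2 + R - 1 = m + R + 1 := by omega
  have e4 : m + 2 + (k + 1) - 1 = m + k + 2 := by omega
  rw [e1, e2, e3, e4]
  have hC : 0 < (m + k + 1).choose k := Nat.choose_pos (by omega)
  have hid : (m + k + 2) * (m + k + 1).choose k = (m + k + 2).choose (k + 1) * (k + 1) :=
    Nat.add_one_mul_choose_eq (m + k + 1) k
  have hre : (m + k + 1).choose k * ((m + k + 2) * R)
      = (m + k + 2).choose (k + 1) * R * (k + 1) := by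
    rw [show (m + k + 1).choose k * ((m + k + 2) * R)
        = ((m + k + 2) * (m + k + 1).choose k) * R from by ring, hid]
    ring
  constructor
  · intro h
    by_contra hlt
    push_neg at hlt
    have h2 : (m + k + 2).choose (k + 1) * R * (k + 1) ≤
        (m + k + 1).choose k * (m + R + 1) * (k + 1) :=
      Nat.mul_le_mul_right _ h
    rw [← hre] at h2
    have h3 : (m + k + 1).choose k * ((m + k + 2) * R)
        ≤ (m + k + 1).choose k * ((m + R + 1) * (k + 1)) := by
      calc (m + k + 1).choose k * ((m + k + 2) * R)
          ≤ (m + k + 1).choose k * (m + R + 1) * (k + 1) := h2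
        _ = (m + k + 1).choose k * ((m + R + 1) * (k + 1)) := by ring
    have key : (m + k + 2) * R ≤ (m + R + 1) * (k + 1) :=
      Nat.le_of_mul_le_mul_left h3 hC
    nlinarith [key, hlt]
  · intro h
    have key : (m + k + 2) * R ≤ (m + R + 1) * (k + 1) := by nlinarith
    have h2 : (m + k + 2).choose (k + 1) * R * (k + 1) ≤
        (m + k + 1).choose k * (m + R + 1) * (k + 1) := by nlinarith [hC, hid, key]
    exact Nat.le_of_mul_le_mul_right h2 (by omega)
end

section
/- For all natural numbers M ≥ 2, R ≥ 1 and l ≥ 1, the inequality C(M+l-2,l)·M + C(M+l-2,l-1)·(M+R-1) ≥ C(M+l-1,l)·R holds if and only if l ≥ R - M (where R - M is taken as an integer, so the condition is automatic when R ≤ M). -/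
/-- Theorem 1 core: for M ≥ 2, R ≥ 1, l ≥ 1,
    C(M+l-2,l)·M + C(M+l-2,l-1)·(M+R-1) ≥ C(M+l-1,l)·R ↔ l ≥ R - M (as integers). -/
theorem mom_all_gce_balance (M R l : ℕ) (hM : 2 ≤ M) (hR : 1 ≤ R) (hl : 1 ≤ l) :
    Nat.choose (M + l - 2) l * M + Nat.choose (M + l - 2) (l - 1) * (M + R - 1)
      ≥ Nat.choose (M + l - 1) l * R ↔ (R : ℤ) - (M : ℤ) ≤ (l : ℤ) := by
  obtain ⟨m, rfl⟩ : ∃ m, M = m + 2 := ⟨M - 2, by omega⟩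
  obtain ⟨k, rfl⟩ : ∃ k, l = k + 1 := ⟨l - 1, by omega⟩
  rw [show m + 2 + (k + 1) - 2 = m + k + 1 by omega,
      show m + 2 + (k + 1) - 1 = m + k + 2 by omega,
      show k + 1 - 1 = k by omega,
      show m + 2 + R - 1 = m + R + 1 by omega]
  set A := Nat.choose (m + k + 1) (k + 1) with hAdef
  set B := Nat.choose (m + k + 1) k with hBdef
  have hB : A * (k + 1) = B * (m + 1) := by
    have := Nat.choose_succ_right_eq (m + k + 1) k
    rw [show m + k + 1 - k = m + 1 by omega] at this
    exact this
  have hP : Nat.choose (m + k + 2) (k + 1) = B + A := by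
    have := Nat.choose_succ_succ (m + k + 1) k
    simpa [Nat.succ_eq_add_one, show m + k + 1 + 1 = m + k + 2 from rfl] using this
  have hA : 0 < A := Nat.choose_pos (by omega)
  rw [hP]
  constructor
  · intro h
    have hR' : R ≤ m + k + 3 := by
      by_contra hc
      push_neg at hc
      have h1 : A * (m + k + 4) ≤ A * R := Nat.mul_le_mul_left A hc
      nlinarith [h, hB, hA]
    push_cast
    omega
  · intro h
    have hR' : R ≤ m + k + 3 := by
      have := h
      push_cast at this
      omega
    have h1 : A * R ≤ A * (m + k + 3) := Nat.mul_le_mul_left A hR'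
    nlinarith [hB]
end

section
/- For all natural numbers M ≥ 2 and R, l with 1 ≤ l < R - M, the strict inequality C(M+l-2,l)·M + C(M+l-2,l-1)·(M+R-1) < C(M+l-1,l)·R holds. -/
/-- For M ≥ 2 and 1 ≤ l < R - M the system is under-determined:
    C(M+l-2,l)·M + C(M+l-2,l-1)·(M+R-1) < C(M+l-1,l)·R. -/
theorem mom_underdetermined_all_gce (M R l : ℕ) (hM : 2 ≤ M) (hl : 1 ≤ l)
    (hlR : l < R - M) :
    Nat.choose (M + l - 2) l * M + Nat.choose (M + l - 2) (l - 1) * (M + R - 1)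
      < Nat.choose (M + l - 1) l * R := by
  obtain ⟨m, rfl⟩ : ∃ m, M = m + 2 := ⟨M - 2, by omega⟩
  obtain ⟨t, rfl⟩ : ∃ t, l = t + 1 := ⟨l - 1, by omega⟩
  obtain ⟨s, rfl⟩ : ∃ s, R = m + t + 4 + s := ⟨R - (m + t + 4), by omega⟩
  have h1 : m + 2 + (t + 1) - 2 = m + t + 1 := by omega
  have h2 : m + 2 + (t + 1) - 1 = m + t + 2 := by omega
  rw [h1, h2]
  have hid : Nat.choose (m + t + 1) (t + 1) * (t + 1)
      = Nat.choose (m + t + 1) t * (m + 1) := by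
    have h := Nat.choose_succ_right_eq (m + t + 1) t
    have e : m + t + 1 - t = m + 1 := by omega
    rw [e] at h
    simpa using h
  have hpas : Nat.choose (m + t + 2) (t + 1)
      = Nat.choose (m + t + 1) t + Nat.choose (m + t + 1) (t + 1) := by
    have := Nat.choose_succ_succ (m + t + 1) t
    simpa using this
  have hA : 1 ≤ Nat.choose (m + t + 1) (t + 1) :=
    Nat.choose_pos (by omega)
  have h3 : m + 2 + (m + t + 4 + s) - 1 = 2 * m + t + 5 + s := by omega
  simp only [Nat.add_sub_cancel, hpas, h3]
  nlinarith [hid, hA]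
end

section
/- For all natural numbers M ≥ 2, R ≥ 1 and l ≥ 1, the inequality C(M+l-2,l) + C(M+l-2,l-1)·(M+R-1) ≥ C(M+l-1,l)·R holds if and only if l ≥ R - 1 (where R - 1 is taken as an integer, so the condition is automatic when R = 1). -/
/-- Theorem 2 core: for M ≥ 2, R ≥ 1, l ≥ 1,
    C(M+l-2,l) + C(M+l-2,l-1)·(M+R-1) ≥ C(M+l-1,l)·R ↔ l ≥ R - 1 (as integers). -/
theorem mom_single_gce_balance (M R l : ℕ) (hM : 2 ≤ M) (hR : 1 ≤ R) (hl : 1 ≤ l) :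
    Nat.choose (M + l - 2) l + Nat.choose (M + l - 2) (l - 1) * (M + R - 1)
      ≥ Nat.choose (M + l - 1) l * R ↔ (R : ℤ) - 1 ≤ (l : ℤ) := by
  obtain ⟨m, rfl⟩ : ∃ m, M = m + 2 := ⟨M - 2, by omega⟩
  obtain ⟨j, rfl⟩ : ∃ j, l = j + 1 := ⟨l - 1, by omega⟩
  obtain ⟨r, rfl⟩ : ∃ r, R = r + 1 := ⟨R - 1, by omega⟩
  have h1 : m + 2 + (j + 1) - 2 = m + j + 1 := by omega
  have h2 : m + 2 + (j + 1) - 1 = m + j + 2 := by omega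
  have h3 : j + 1 - 1 = j := by omega
  have h4 : m + 2 + (r + 1) - 1 = m + r + 2 := by omega
  rw [h1, h2, h3, h4]
  set A := Nat.choose (m + j + 1) (j + 1) with hAdef
  set B := Nat.choose (m + j + 1) j with hBdef
  have hp : Nat.choose (m + j + 2) (j + 1) = B + A := Nat.choose_succ_succ (m + j + 1) j
  have key : A * (j + 1) = B * (m + 1) := by
    have := Nat.choose_succ_right_eq (m + j + 1) j
    rw [show m + j + 1 - j = m + 1 by omega] at this
    exact this
  have hA : 0 < A := Nat.choose_pos (by omega)
  rw [hp]
  constructor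
  · intro h
    have h2 : A * r ≤ A * (j + 1) := by nlinarith [key]
    have := Nat.le_of_mul_le_mul_left h2 hA
    push_cast; omega
  · intro h
    have hr : r ≤ j + 1 := by push_cast at h; omega
    have h2 : A * r ≤ A * (j + 1) := Nat.mul_le_mul_left A hr
    nlinarith [key]
end

section
/- For all natural numbers M ≥ 2, l ≥ 1, R ≥ 1 and B with 1 ≤ B ≤ M, the inequality B·C(M+l-2,l) + C(M+l-2,l-1)·(M+R-1) ≥ C(M+l-1,l)·R holds if and only if l ≥ R - B (where R - B is taken as an integer, so the condition is automatic when R ≤ B). -/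
/-- Corollary 1 core: for M ≥ 2, l ≥ 1, R ≥ 1 and 1 ≤ B ≤ M,
    B·C(M+l-2,l) + C(M+l-2,l-1)·(M+R-1) ≥ C(M+l-1,l)·R ↔ l ≥ R - B (as integers). -/
theorem mom_B_gce_balance (M l R B : ℕ) (hM : 2 ≤ M) (hl : 1 ≤ l) (hR : 1 ≤ R)
    (hB1 : 1 ≤ B) (hB2 : B ≤ M) :
    B * Nat.choose (M + l - 2) l + Nat.choose (M + l - 2) (l - 1) * (M + R - 1)
      ≥ Nat.choose (M + l - 1) l * R ↔ (R : ℤ) - (B : ℤ) ≤ (l : ℤ) := by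
  obtain ⟨m, rfl⟩ := Nat.exists_eq_add_of_le hM
  obtain ⟨k, rfl⟩ := Nat.exists_eq_add_of_le hl
  rw [Nat.add_comm 1 k]
  have e1 : 2 + m + (k + 1) - 2 = m + k + 1 := by omega
  have e2 : (k : ℕ) + 1 - 1 = k := by omega
  have e3 : 2 + m + (k + 1) - 1 = (m + k + 1) + 1 := by omega
  have e4 : 2 + m + R - 1 = m + R + 1 := by omega
  rw [e1, e2, e3, e4]
  set a := Nat.choose (m + k + 1) (k + 1) with ha_def
  set b := Nat.choose (m + k + 1) k with hb_def
  have hpascal : Nat.choose ((m + k + 1) + 1) (k + 1) = b + a := by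
    rw [Nat.choose_succ_succ]
  have hkey : a * (k + 1) = b * (m + 1) := by
    have := Nat.choose_succ_right_eq (m + k + 1) k
    simpa [ha_def, hb_def, show m + k + 1 - k = m + 1 by omega] using this
  have ha1 : 1 ≤ a := Nat.choose_pos (by omega)
  rw [hpascal]
  constructor
  · intro h
    zify at h hkey ha1
    push_cast at h ⊢
    nlinarith [h, hkey, ha1]
  · intro h
    zify at hkey ha1 ⊢
    push_cast at h ⊢
    nlinarith [h, hkey, ha1, (by positivity : (0:ℤ) ≤ (b:ℤ))]
end

section
/- For all natural numbers M ≥ 2, R ≥ 2 and l with 1 ≤ l < R - 1, the strict inequality C(M+l-2,l) + C(M+l-2,l-1)·(M+R-1) < C(M+l-1,l)·R holds. -/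
/-- For M ≥ 2, R ≥ 2 and 1 ≤ l < R - 1 the single-GCE system is under-determined:
    C(M+l-2,l) + C(M+l-2,l-1)·(M+R-1) < C(M+l-1,l)·R. -/
theorem mom_underdetermined_single_gce (M R l : ℕ) (hM : 2 ≤ M) (hR : 2 ≤ R)
    (hl : 1 ≤ l) (hlR : l < R - 1) :
    Nat.choose (M + l - 2) l + Nat.choose (M + l - 2) (l - 1) * (M + R - 1)
      < Nat.choose (M + l - 1) l * R := by
  obtain ⟨k, rfl⟩ : ∃ k, l = k + 1 := ⟨l - 1, (Nat.succ_pred_eq_of_pos hl).symm⟩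
  obtain ⟨m, rfl⟩ : ∃ m, M = m + 2 := ⟨M - 2, (Nat.sub_add_cancel hM).symm⟩
  obtain ⟨r, rfl⟩ : ∃ r, R = r + (k + 3) := by
    refine ⟨R - (k + 3), (Nat.sub_add_cancel ?_).symm⟩
    omega
  have e1 : m + 2 + (k + 1) - 2 = m + k + 1 := by omega
  have e2 : m + 2 + (k + 1) - 1 = m + k + 2 := by omega
  have e3 : m + 2 + (r + (k + 3)) - 1 = m + r + k + 4 := by omega
  rw [e1, e2, e3]
  simp only [Nat.add_sub_cancel]
  have pascal : Nat.choose (m + k + 2) (k + 1)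
      = Nat.choose (m + k + 1) k + Nat.choose (m + k + 1) (k + 1) := by
    simpa using Nat.choose_succ_succ (m + k + 1) k
  have key : Nat.choose (m + k + 1) (k + 1) * (k + 1)
      = Nat.choose (m + k + 1) k * (m + 1) := by
    have := Nat.choose_succ_right_eq (m + k + 1) k
    have h : m + k + 1 - k = m + 1 := by omega
    rw [h] at this
    exact this
  have ha : 0 < Nat.choose (m + k + 1) (k + 1) :=
    Nat.choose_pos (by omega)
  nlinarith [pascal, key, ha]
end
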